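/- arXiv:1205.2874 — 4 statements merged into one kernel-verified Lean document; each statement's English description precedes it below -/
import Mathlib

section
/- Fix β ∈ (0,1] and g ∈ [0,1], and let J be a random index with P(J = i) = q_i > 0. Define g̃ = (g·1_{J=i} + β)/q_i. Then E[exp(β(g − g̃))] ≤ (1 + β²/q_i)·exp(−β²/q_i) ≤ 1. -/
open MeasureTheory

lemma exp_le_one_add_add_sq {x : ℝ} (hx : x ≤ 1) : Real.exp x ≤ 1 + x + x ^ 2 := by
  rcases le_or_gt (-1) x with h | h
  · have habs : |x| ≤ 1 := abs_le.2 ⟨h, hx⟩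
    have hb := Real.exp_bound habs (n := 3) (by norm_num)
    have hsum : ∑ m ∈ Finset.range 3, x ^ m / m.factorial = 1 + x + x ^ 2 / 2 := by
      norm_num [Finset.sum_range_succ, Nat.factorial]
    rw [hsum] at hb
    have h1 : Real.exp x - (1 + x + x ^ 2 / 2) ≤ |x| ^ 3 * (4 / (6 * 3)) := by
      have := (abs_sub_le_iff.1 hb).1
      refine this.trans (le_of_eq ?_); norm_num [Nat.factorial]
    have h2 : |x| ^ 3 ≤ x ^ 2 := by
      have : |x| ^ 3 ≤ |x| ^ 2 := pow_le_pow_of_le_one (abs_nonneg x) habs (by norm_num)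
      simpa [sq_abs] using this
    nlinarith
  · have : Real.exp x < 1 := Real.exp_lt_one_iff.2 (by linarith)
    nlinarith

theorem estimator_mgf_bound
    {Ω : Type*} {m0 : MeasurableSpace Ω} {μ : Measure Ω} [IsProbabilityMeasure μ]
    (β g q : ℝ) (hβ : 0 < β) (hβ1 : β ≤ 1) (hg : 0 ≤ g) (hg1 : g ≤ 1)
    (hq : 0 < q) (hq1 : q ≤ 1)
    (A : Set Ω) (hA : MeasurableSet A) (hAq : μ A = ENNReal.ofReal q) :
    (∫ ω, Real.exp (β * (g - (g * A.indicator (fun _ => (1 : ℝ)) ω + β) / q)) ∂μ) ≤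
        (1 + β ^ 2 / q) * Real.exp (-(β ^ 2) / q) ∧
    (1 + β ^ 2 / q) * Real.exp (-(β ^ 2) / q) ≤ 1 := by
  have hqne : q ≠ 0 := ne_of_gt hq
  set a : ℝ := Real.exp (β * (g - (g * 1 + β) / q)) with ha
  set b : ℝ := Real.exp (β * (g - (g * 0 + β) / q)) with hb
  -- rewrite integrand as sum of indicators
  have hfun : (fun ω => Real.exp (β * (g - (g * A.indicator (fun _ => (1 : ℝ)) ω + β) / q)))
      = fun ω => A.indicator (fun _ => a) ω + Aᶜ.indicator (fun _ => b) ω := by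
    funext ω
    by_cases hω : ω ∈ A
    · simp [Set.indicator_of_mem hω, Set.indicator_of_notMem (by simpa using hω : ω ∉ Aᶜ), ha]
    · simp [Set.indicator_of_notMem hω, Set.indicator_of_mem (by simpa using hω : ω ∈ Aᶜ), hb]
  have hμAc : μ Aᶜ = ENNReal.ofReal (1 - q) := by
    rw [measure_compl hA (measure_ne_top μ A), hAq, measure_univ]
    rw [ENNReal.ofReal_sub _ hq.le, ENNReal.ofReal_one]
  have hint : (∫ ω, Real.exp (β * (g - (g * A.indicator (fun _ => (1 : ℝ)) ω + β) / q)) ∂μ)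
      = q * a + (1 - q) * b := by
    rw [hfun]
    rw [integral_add ((integrable_const a).indicator hA) ((integrable_const b).indicator hA.compl)]
    rw [integral_indicator_const _ hA, integral_indicator_const _ hA.compl, measureReal_def, measureReal_def, hAq, hμAc,
      ENNReal.toReal_ofReal hq.le, ENNReal.toReal_ofReal (by linarith)]
    simp [smul_eq_mul]
  rw [hint]
  constructor
  · -- factor exp(-β^2/q)
    have hafac : a = Real.exp (β * g * (1 - 1/q)) * Real.exp (-(β ^ 2) / q) := by
      rw [ha, ← Real.exp_add]; ring_nf
    have hbfac : b = Real.exp (β * g) * Real.exp (-(β ^ 2) / q) := by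
      rw [hb, ← Real.exp_add]; ring_nf
    rw [hafac, hbfac]
    have hexp_pos : (0:ℝ) < Real.exp (-(β ^ 2) / q) := Real.exp_pos _
    rw [show q * (Real.exp (β * g * (1 - 1/q)) * Real.exp (-(β ^ 2) / q))
        + (1 - q) * (Real.exp (β * g) * Real.exp (-(β ^ 2) / q))
        = (q * Real.exp (β * g * (1 - 1/q)) + (1 - q) * Real.exp (β * g))
          * Real.exp (-(β ^ 2) / q) by ring]
    apply mul_le_mul_of_nonneg_right _ hexp_pos.le
    -- key scalar inequality
    set x1 : ℝ := β * g with hx1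
    set x2 : ℝ := β * g * (1 - 1/q) with hx2
    have hx1nn : 0 ≤ x1 := mul_nonneg hβ.le hg
    have hx1le : x1 ≤ 1 := by
      calc x1 ≤ 1 * 1 := mul_le_mul hβ1 hg1 hg (by norm_num)
      _ = 1 := by norm_num
    have hx2le : x2 ≤ 1 := by
      have h1q : 1 ≤ 1/q := (le_div_iff₀ hq).2 (by linarith)
      have : x2 ≤ 0 := mul_nonpos_of_nonneg_of_nonpos hx1nn (by linarith)
      linarith
    have hb1 := exp_le_one_add_add_sq hx1le
    have hb2 := exp_le_one_add_add_sq hx2le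
    have key : q * (1 + x2 + x2 ^ 2) + (1 - q) * (1 + x1 + x1 ^ 2) ≤ 1 + β ^ 2 / q := by
      rw [hx2, hx1]
      have expand : q * (1 + β * g * (1 - 1 / q) + (β * g * (1 - 1 / q)) ^ 2)
          + (1 - q) * (1 + β * g + (β * g) ^ 2)
          = 1 + (β * g) ^ 2 * (1 - q) / q := by
        field_simp
        ring
      rw [expand]
      have hnum : (β * g) ^ 2 * (1 - q) ≤ β ^ 2 := by
        have h1 : (β * g) ^ 2 * (1 - q) ≤ (β * g) ^ 2 := by nlinarith [sq_nonneg (β * g)]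
        have h2 : (β * g) ^ 2 ≤ β ^ 2 := by
          nlinarith [sq_nonneg β, mul_nonneg (sub_nonneg.2 hg1) (by linarith : (0:ℝ) ≤ 1 + g)]
        linarith
      have := (div_le_div_iff_of_pos_right hq).2 hnum
      linarith
    calc q * Real.exp x2 + (1 - q) * Real.exp x1
        ≤ q * (1 + x2 + x2 ^ 2) + (1 - q) * (1 + x1 + x1 ^ 2) := by
          apply add_le_add
          · exact mul_le_mul_of_nonneg_left hb2 hq.le
          · exact mul_le_mul_of_nonneg_left hb1 (by linarith)
      _ ≤ 1 + β ^ 2 / q := key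
  · have hu : 0 ≤ β ^ 2 / q := div_nonneg (sq_nonneg β) hq.le
    have h1 : 1 + β ^ 2 / q ≤ Real.exp (β ^ 2 / q) := by
      have := Real.add_one_le_exp (β ^ 2 / q); linarith
    have h2 : Real.exp (-(β ^ 2) / q) = (Real.exp (β ^ 2 / q))⁻¹ := by
      rw [← Real.exp_neg]; ring_nf
    rw [h2]
    rw [mul_inv_le_iff₀ (Real.exp_pos _)]
    linarith
end

section
/- Let p, q be probability vectors on the k-simplex with q_j = √(p_j)/∑_l √(p_l) and all p_j > 0, and let g ∈ [0,1]^k. Let J be a random index with P(J = j) = q_j, and define g'_j = g_j·1_{J=j}/q_j. Then E[(∑_j p_j g'_j)²] ≤ ∑_j p_j²/q_j ≤ ‖p‖_{1/2}. -/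
open MeasureTheory

theorem second_moment_weighted_estimator
    {Ω : Type*} {m0 : MeasurableSpace Ω} {μ : Measure Ω} [IsProbabilityMeasure μ]
    (k : ℕ) (hk : 1 ≤ k) (p : Fin k → ℝ) (hp : ∀ j, 0 < p j) (hsum : ∑ j, p j = 1)
    (g : Fin k → ℝ) (hg : ∀ j, 0 ≤ g j) (hg1 : ∀ j, g j ≤ 1)
    (J : Ω → Fin k) (hJ : Measurable J)
    (hJdist : ∀ j, μ {ω | J ω = j} =
      ENNReal.ofReal (Real.sqrt (p j) / ∑ l, Real.sqrt (p l))) :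
    (∫ ω, (∑ j, p j * (if J ω = j then
        g j / (Real.sqrt (p j) / ∑ l, Real.sqrt (p l)) else 0)) ^ 2 ∂μ) ≤
      ∑ j, (p j) ^ 2 / (Real.sqrt (p j) / ∑ l, Real.sqrt (p l)) ∧
    (∑ j, (p j) ^ 2 / (Real.sqrt (p j) / ∑ l, Real.sqrt (p l))) ≤
      (∑ j, Real.sqrt (p j)) ^ 2 := by
  set S := ∑ l, Real.sqrt (p l) with hS
  have hSpos : 0 < S :=
    Finset.sum_pos (fun l _ => Real.sqrt_pos.2 (hp l)) ⟨⟨0, hk⟩, Finset.mem_univ _⟩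
  set q : Fin k → ℝ := fun j => Real.sqrt (p j) / S with hqdef
  have hqpos : ∀ j, 0 < q j := fun j => div_pos (Real.sqrt_pos.2 (hp j)) hSpos
  constructor
  · -- bound on the integral
    have key : ∀ ω, (∑ j, p j * (if J ω = j then g j / q j else 0)) ^ 2
        = ∑ j, Set.indicator {ω | J ω = j}
            (fun _ => (p j * g j / q j) ^ 2) ω := by
      intro ω
      have h1 : (∑ j, p j * (if J ω = j then g j / q j else 0))
          = p (J ω) * g (J ω) / q (J ω) := by
        rw [Finset.sum_eq_single (J ω)]
        · simp [mul_div_assoc]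
        · intro b _ hb; simp [Ne.symm hb]
        · intro h; exact absurd (Finset.mem_univ _) h
      have h2 : (∑ j, Set.indicator {ω | J ω = j}
            (fun _ => (p j * g j / q j) ^ 2) ω)
          = (p (J ω) * g (J ω) / q (J ω)) ^ 2 := by
        rw [Finset.sum_eq_single (J ω)]
        · simp [Set.indicator]
        · intro b _ hb; simp [Set.indicator, Ne.symm hb]
        · intro h; exact absurd (Finset.mem_univ _) h
      rw [h1, h2]
    have hmeas : ∀ j : Fin k, MeasurableSet {ω | J ω = j} := by
      intro j
      exact hJ (measurableSet_singleton j)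
    have hint : (∫ ω, (∑ j, p j * (if J ω = j then g j / q j else 0)) ^ 2 ∂μ)
        = ∑ j, (μ {ω | J ω = j}).toReal * (p j * g j / q j) ^ 2 := by
      simp only [key]
      rw [integral_finset_sum]
      · refine Finset.sum_congr rfl fun j _ => ?_
        rw [integral_indicator_const _ (hmeas j)]
        simp [mul_comm]
        exact mul_comm _ _
      · intro j _
        exact (integrable_const _).indicator (hmeas j)
    rw [hint]
    refine Finset.sum_le_sum fun j _ => ?_
    rw [hJdist j, ENNReal.toReal_ofReal (hqpos j).le]
    have hq : q j ≠ 0 := (hqpos j).ne'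
    have heq : q j * (p j * g j / q j) ^ 2 = (p j) ^ 2 * (g j) ^ 2 / q j := by
      field_simp
    rw [heq]
    have hg2 : (g j) ^ 2 ≤ 1 := by
      have := mul_le_one₀ (hg1 j) (hg j) (hg1 j)
      simpa [sq] using this
    calc (p j) ^ 2 * (g j) ^ 2 / q j ≤ (p j) ^ 2 * 1 / q j := by
          gcongr
        _ ≤ (p j) ^ 2 / q j := by rw [mul_one]
  · -- second bound
    have hterm : ∀ j, (p j) ^ 2 / q j = p j * Real.sqrt (p j) * S := by
      intro j
      have hsq : Real.sqrt (p j) * Real.sqrt (p j) = p j :=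
        Real.mul_self_sqrt (hp j).le
      have hne : Real.sqrt (p j) ≠ 0 := (Real.sqrt_pos.2 (hp j)).ne'
      rw [hqdef]
      field_simp
      linear_combination (-(p j)) * hsq
    simp only [show ∀ j, p j ^ 2 / (Real.sqrt (p j) / S) = p j * Real.sqrt (p j) * S from hterm]
    rw [← Finset.sum_mul, sq]
    apply mul_le_mul_of_nonneg_right _ hSpos.le
    apply Finset.sum_le_sum
    intro j _
    have hpj1 : p j ≤ 1 := by
      rw [← hsum]
      exact Finset.single_le_sum (fun l _ => (hp l).le) (Finset.mem_univ j)
    nlinarith [Real.sqrt_nonneg (p j), Real.sqrt_pos.2 (hp j)]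
end

section
/- Let p, q be as above (q_j = √(p_j)/∑_l √(p_l)) and g ∈ [0,1]^k, with J a random index distributed according to q, and g'_j = g_j·1_{J=j}/q_j. Then E[∑_j p_j (g'_j)²] ≤ ∑_j p_j/q_j = ‖p‖_{1/2}. -/
open MeasureTheory

theorem second_moment_estimator_sq
    {Ω : Type*} {m0 : MeasurableSpace Ω} {μ : Measure Ω} [IsProbabilityMeasure μ]
    (k : ℕ) (hk : 1 ≤ k) (p : Fin k → ℝ) (hp : ∀ j, 0 < p j) (hsum : ∑ j, p j = 1)
    (g : Fin k → ℝ) (hg : ∀ j, 0 ≤ g j) (hg1 : ∀ j, g j ≤ 1)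
    (J : Ω → Fin k) (hJ : Measurable J)
    (hJdist : ∀ j, μ {ω | J ω = j} =
      ENNReal.ofReal (Real.sqrt (p j) / ∑ l, Real.sqrt (p l))) :
    (∫ ω, ∑ j, p j * (if J ω = j then
        g j / (Real.sqrt (p j) / ∑ l, Real.sqrt (p l)) else 0) ^ 2 ∂μ) ≤
      ∑ j, p j / (Real.sqrt (p j) / ∑ l, Real.sqrt (p l)) ∧
    (∑ j, p j / (Real.sqrt (p j) / ∑ l, Real.sqrt (p l))) =
      (∑ j, Real.sqrt (p j)) ^ 2 := by
  haveI : Nonempty (Fin k) := ⟨⟨0, hk⟩⟩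
  have hne : (Finset.univ : Finset (Fin k)).Nonempty := Finset.univ_nonempty
  set S : ℝ := ∑ l, Real.sqrt (p l) with hS
  have hSpos : 0 < S :=
    Finset.sum_pos (fun l _ => Real.sqrt_pos.mpr (hp l)) hne
  have hqpos : ∀ j, 0 < Real.sqrt (p j) / S :=
    fun j => div_pos (Real.sqrt_pos.mpr (hp j)) hSpos
  set q : Fin k → ℝ := fun j => Real.sqrt (p j) / S with hq
  set c : Fin k → ℝ := fun j => g j / q j with hc
  -- rewrite each summand as an indicator
  have hind : ∀ j : Fin k, (fun ω => p j * (if J ω = j then c j else 0) ^ 2)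
      = Set.indicator {ω | J ω = j} (fun _ => p j * (c j) ^ 2) := by
    intro j
    funext ω
    by_cases h : J ω = j <;>
      simp [Set.indicator, h, Set.mem_setOf_eq]
  have hmeas : ∀ j : Fin k, MeasurableSet {ω | J ω = j} := by
    intro j
    exact hJ (measurableSet_singleton j)
  have hint : ∀ j : Fin k, Integrable
      (fun ω => p j * (if J ω = j then c j else 0) ^ 2) μ := by
    intro j
    rw [hind j]
    exact (integrable_const _).indicator (hmeas j)
  have hval : ∀ j : Fin k,
      (∫ ω, p j * (if J ω = j then c j else 0) ^ 2 ∂μ)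
        = q j * (p j * (c j) ^ 2) := by
    intro j
    rw [hind j, integral_indicator_const _ (hmeas j), measureReal_def, hJdist j, smul_eq_mul,
      ENNReal.toReal_ofReal (hqpos j).le]
  have key : (∫ ω, ∑ j, p j * (if J ω = j then c j else 0) ^ 2 ∂μ)
      = ∑ j, q j * (p j * (c j) ^ 2) := by
    rw [integral_finset_sum _ (fun j _ => hint j)]
    exact Finset.sum_congr rfl fun j _ => hval j
  constructor
  · rw [key]
    apply Finset.sum_le_sum
    intro j _
    have hqj := hqpos j
    have hgj2 : (g j) ^ 2 ≤ 1 := by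
      have := hg j; have := hg1 j; nlinarith
    have : q j * (p j * (c j) ^ 2) = p j * (g j) ^ 2 / q j := by
      simp only [hc]
      field_simp
    rw [this]
    have hnum : p j * g j ^ 2 ≤ p j := by
      nlinarith [mul_le_mul_of_nonneg_left hgj2 (hp j).le]
    exact div_le_div_of_nonneg_right hnum hqj.le
  · have : ∀ j : Fin k, p j / q j = Real.sqrt (p j) * S := by
      intro j
      have hsq : Real.sqrt (p j) * Real.sqrt (p j) = p j :=
        Real.mul_self_sqrt (hp j).le
      have hsp : Real.sqrt (p j) ≠ 0 := (Real.sqrt_pos.mpr (hp j)).ne'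
      show p j / (Real.sqrt (p j) / S) = _
      rw [div_div_eq_mul_div, div_eq_iff hsp]
      linear_combination (-S) * hsq
    rw [Finset.sum_congr rfl fun j _ => this j, ← Finset.sum_mul, sq]
end

section
/- For a weight-update scheme w_j(t+1) = w_j(t)·exp(η·g̃_j(t)) with w_j(1) = 1, and mixed distribution p_j(t) = (1−γ)·w_j(t)/∑_l w_l(t) + γ/k, if η·g̃_j(t) ≤ 1 for all j,t, then for every action i and horizon T: ∑_{t=1}^T g̃_i(t) − (1/(1−γ))·∑_{t=1}^T ∑_{j=1}^k p_j(t)·g̃_j(t) ≤ log(k)/η + (η/(1−γ))·∑_{t=1}^T ∑_{j=1}^k p_j(t)·g̃_j(t)². -/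
theorem multiplicative_weights_regret
    (k : ℕ) (hk : 2 ≤ k) (T : ℕ) (η γ : ℝ) (hη : 0 < η) (hγ0 : 0 ≤ γ) (hγ1 : γ < 1)
    (gt : ℕ → Fin k → ℝ) (hgt : ∀ t j, 0 ≤ gt t j) (hηgt : ∀ t j, η * gt t j ≤ 1)
    (w : ℕ → Fin k → ℝ) (hw1 : ∀ j, w 1 j = 1)
    (hwrec : ∀ t j, w (t + 1) j = w t j * Real.exp (η * gt t j))
    (p : ℕ → Fin k → ℝ)
    (hp : ∀ t j, p t j = (1 - γ) * w t j / (∑ l, w t l) + γ / k) :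
    ∀ i : Fin k,
      (∑ t ∈ Finset.Icc 1 T, gt t i) -
        (1 / (1 - γ)) * ∑ t ∈ Finset.Icc 1 T, ∑ j, p t j * gt t j ≤
      Real.log k / η +
        (η / (1 - γ)) * ∑ t ∈ Finset.Icc 1 T, ∑ j, p t j * (gt t j) ^ 2 := by
  intro i
  have hγ : (0:ℝ) < 1 - γ := by linarith
  have hkpos : (0:ℝ) < k := by positivity
  haveI : Nonempty (Fin k) := ⟨⟨0, by omega⟩⟩
  set W : ℕ → ℝ := fun t => ∑ l, w t l with hW
  -- positivity of weights
  have hwpos : ∀ t j, 0 < w (t + 1) j := by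
    intro t j
    induction t with
    | zero => simp [hw1]
    | succ n ih => rw [hwrec]; exact mul_pos ih (Real.exp_pos _)
  have hWpos : ∀ t, 0 < W (t + 1) := fun t =>
    Finset.sum_pos (fun j _ => hwpos t j) Finset.univ_nonempty
  -- quadratic bound on exp
  have hexp : ∀ {x : ℝ}, 0 ≤ x → x ≤ 1 → Real.exp x ≤ 1 + x + x ^ 2 := by
    intro x h0 h1
    have h := Real.exp_bound' h0 h1 (n := 2) (by norm_num)
    simp [Finset.sum_range_succ, Nat.factorial] at h
    nlinarith [sq_nonneg x]
  -- per-step bound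
  have step : ∀ t : ℕ,
      Real.log (W (t + 1 + 1)) - Real.log (W (t + 1)) ≤
        η / (1 - γ) * ∑ j, p (t + 1) j * gt (t + 1) j +
        η ^ 2 / (1 - γ) * ∑ j, p (t + 1) j * gt (t + 1) j ^ 2 := by
    intro t
    set s := t + 1 with hs
    have hWs := hWpos t
    have hWs1 := hWpos (t + 1)
    have hsum : W (s + 1) = ∑ j, w s j * Real.exp (η * gt s j) := by
      simp [hW, hwrec]
    have hub : W (s + 1) ≤ W s + ∑ j, w s j * (η * gt s j + (η * gt s j) ^ 2) := by
      rw [hsum, hW]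
      have : ∀ j : Fin k, w s j * Real.exp (η * gt s j) ≤
          w s j + w s j * (η * gt s j + (η * gt s j) ^ 2) := by
        intro j
        have h1 := hexp (mul_nonneg hη.le (hgt s j)) (hηgt s j)
        have h2 := (hwpos t j).le
        nlinarith
      calc (∑ j, w s j * Real.exp (η * gt s j))
          ≤ ∑ j : Fin k, (w s j + w s j * (η * gt s j + (η * gt s j) ^ 2)) :=
            Finset.sum_le_sum fun j _ => this j
        _ = _ := by rw [Finset.sum_add_distrib]
    have hlog : Real.log (W (s + 1)) - Real.log (W s) ≤ W (s + 1) / W s - 1 := by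
      rw [← Real.log_div hWs1.ne' hWs.ne']
      exact Real.log_le_sub_one_of_pos (div_pos hWs1 hWs)
    have hfrac : W (s + 1) / W s - 1 ≤
        ∑ j, (w s j / W s) * (η * gt s j + (η * gt s j) ^ 2) := by
      have : W (s + 1) / W s - 1 ≤
          (∑ j, w s j * (η * gt s j + (η * gt s j) ^ 2)) / W s := by
        rw [div_sub_one hWs.ne', div_le_div_iff₀ hWs hWs]
        have h := hub
        nlinarith
      calc W (s + 1) / W s - 1 ≤ _ := this
        _ = _ := by rw [Finset.sum_div]; exact Finset.sum_congr rfl fun j _ => by ring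
    have hratio : ∀ j : Fin k, w s j / W s ≤ p s j / (1 - γ) := by
      intro j
      have hpj := hp s j
      have hγk : 0 ≤ γ / k := by positivity
      rw [div_le_div_iff₀ hWs hγ]
      have hwW : (1 - γ) * w s j / W s ≤ p s j := by rw [hpj]; linarith
      have := (div_le_iff₀ hWs).mp hwW
      nlinarith
    have hbound : ∑ j, (w s j / W s) * (η * gt s j + (η * gt s j) ^ 2) ≤
        ∑ j, (p s j / (1 - γ)) * (η * gt s j + (η * gt s j) ^ 2) := by
      refine Finset.sum_le_sum fun j _ => mul_le_mul_of_nonneg_right (hratio j) ?_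
      have := hgt s j
      have : 0 ≤ η * gt s j := mul_nonneg hη.le (hgt s j)
      positivity
    have hfin : ∑ j, (p s j / (1 - γ)) * (η * gt s j + (η * gt s j) ^ 2) =
        η / (1 - γ) * ∑ j, p s j * gt s j +
        η ^ 2 / (1 - γ) * ∑ j, p s j * gt s j ^ 2 := by
      rw [Finset.mul_sum, Finset.mul_sum, ← Finset.sum_add_distrib]
      exact Finset.sum_congr rfl fun j _ => by field_simp
    calc Real.log (W (s + 1)) - Real.log (W s) ≤ W (s + 1) / W s - 1 := hlog
      _ ≤ _ := hfrac
      _ ≤ _ := hbound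
      _ = _ := hfin
  -- telescoping
  have htel : ∀ n : ℕ, ∑ t ∈ Finset.Icc 1 n,
      (Real.log (W (t + 1)) - Real.log (W t)) = Real.log (W (n + 1)) - Real.log (W 1) := by
    intro n
    induction n with
    | zero => simp
    | succ m ih =>
        rw [Finset.sum_Icc_succ_top (by omega : 1 ≤ m + 1), ih]; ring
  -- value of w (T+1) i
  have hwi : ∀ n : ℕ, w (n + 1) i = Real.exp (η * ∑ t ∈ Finset.Icc 1 n, gt t i) := by
    intro n
    induction n with
    | zero => simp [hw1]
    | succ m ih =>
        rw [hwrec, ih, Finset.sum_Icc_succ_top (by omega : 1 ≤ m + 1), ← Real.exp_add]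
        ring_nf
  have hW1 : W 1 = k := by simp [hW, hw1]
  -- lower bound on log W(T+1)
  have hlow : η * ∑ t ∈ Finset.Icc 1 T, gt t i ≤ Real.log (W (T + 1)) := by
    have h1 : w (T + 1) i ≤ W (T + 1) :=
      Finset.single_le_sum (fun j _ => (hwpos T j).le) (Finset.mem_univ i)
    have h2 := Real.log_le_log (hwpos T i) h1
    rwa [hwi T, Real.log_exp] at h2
  -- sum the per-step bounds
  have hsumstep : Real.log (W (T + 1)) - Real.log (W 1) ≤
      η / (1 - γ) * ∑ t ∈ Finset.Icc 1 T, ∑ j, p t j * gt t j +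
      η ^ 2 / (1 - γ) * ∑ t ∈ Finset.Icc 1 T, ∑ j, p t j * gt t j ^ 2 := by
    rw [← htel T, Finset.mul_sum, Finset.mul_sum, ← Finset.sum_add_distrib]
    refine Finset.sum_le_sum fun t ht => ?_
    obtain ⟨m, rfl⟩ : ∃ m, t = m + 1 := ⟨t - 1, by have := (Finset.mem_Icc.mp ht).1; omega⟩
    exact step m
  have key : η * ∑ t ∈ Finset.Icc 1 T, gt t i ≤ Real.log k +
      η / (1 - γ) * ∑ t ∈ Finset.Icc 1 T, ∑ j, p t j * gt t j +
      η ^ 2 / (1 - γ) * ∑ t ∈ Finset.Icc 1 T, ∑ j, p t j * gt t j ^ 2 := by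
    have := hsumstep
    rw [hW1] at this
    linarith [hlow]
  -- finish: divide by η
  set A := ∑ t ∈ Finset.Icc 1 T, gt t i
  set B := ∑ t ∈ Finset.Icc 1 T, ∑ j, p t j * gt t j
  set C := ∑ t ∈ Finset.Icc 1 T, ∑ j, p t j * gt t j ^ 2
  refine le_of_mul_le_mul_left ?_ hη
  have e1 : η * (Real.log k / η + η / (1 - γ) * C) = Real.log k + η ^ 2 / (1 - γ) * C := by
    field_simp
  have e2 : η * (A - 1 / (1 - γ) * B) = η * A - η / (1 - γ) * B := by
    field_simp
  rw [e1, e2]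
  linarith [key]
end
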